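/- arXiv:math/9910172 — 2 statements merged into one kernel-verified Lean document; each statement's English description precedes it below -/
import Mathlib

section
/- For every nonzero a ∈ g_{−1}, the degree-zero part of the derived algebra of p^a equals ⁅a, g_1⁆: that is, span{⁅x, y⁆ : x, y ∈ p^a} ∩ g_0 = span{⁅a, x⁆ : x ∈ g_1}. In particular, span{⁅x, y⁆ : x ∈ g_1, y ∈ p^a_{−1}} = span{⁅a, x⁆ : x ∈ g_1}. -/
variable {g : Type*} [LieRing g] [LieAlgebra ℂ g]

/-- `p^a_{−1}`: the span of all iterated brackets `(ad c_r)⋯(ad c_1)(a)` with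
`c_1, …, c_r ∈ g_0` (the empty list giving `a` itself). -/
noncomputable def paNegOne (G : ℤ → Submodule ℂ g) (a : g) : Submodule ℂ g :=
  Submodule.span ℂ
    {x | ∃ l : List g, (∀ c ∈ l, c ∈ G 0) ∧ x = l.foldr (fun c y => ⁅c, y⁆) a}

/-- `paNegK G a m = p^a_{−(m+1)}`: inductively, `p^a_{−k−1} = span ⁅p^a_{−1}, p^a_{−k}⁆`. -/
noncomputable def paNegK (G : ℤ → Submodule ℂ g) (a : g) : ℕ → Submodule ℂ g
  | 0 => paNegOne G a
  | m + 1 => Submodule.span ℂ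
      {z | ∃ x ∈ paNegOne G a, ∃ y ∈ paNegK G a m, z = ⁅x, y⁆}

/-- The family `p^a_j`: equal to `g_j` for `j ≥ 0` and to `p^a_{−k}` for `j = −k < 0`. -/
noncomputable def pa (G : ℤ → Submodule ℂ g) (a : g) (j : ℤ) : Submodule ℂ g :=
  if 0 ≤ j then G j else paNegK G a ((-j).toNat - 1)

section Aux

variable {g : Type*} [LieRing g] [LieAlgebra ℂ g] (G : ℤ → Submodule ℂ g) (a : g)

private lemma foldr_mem (hgrade : ∀ i j : ℤ, ∀ x ∈ G i, ∀ y ∈ G j, ⁅x, y⁆ ∈ G (i + j))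
    (ha : a ∈ G (-1)) :
    ∀ l : List g, (∀ c ∈ l, c ∈ G 0) → l.foldr (fun c y => ⁅c, y⁆) a ∈ G (-1) := by
  intro l hl
  induction l with
  | nil => exact ha
  | cons c l ih =>
      have h := hgrade 0 (-1) c (hl c (by simp)) _
        (ih fun d hd => hl d (List.mem_cons_of_mem _ hd))
      simpa using h

private lemma paNegOne_le (hgrade : ∀ i j : ℤ, ∀ x ∈ G i, ∀ y ∈ G j, ⁅x, y⁆ ∈ G (i + j))
    (ha : a ∈ G (-1)) : paNegOne G a ≤ G (-1) := by
  rw [paNegOne, Submodule.span_le]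
  rintro x ⟨l, hl, rfl⟩
  exact foldr_mem G a hgrade ha l hl

private lemma paNegK_le (hgrade : ∀ i j : ℤ, ∀ x ∈ G i, ∀ y ∈ G j, ⁅x, y⁆ ∈ G (i + j))
    (ha : a ∈ G (-1)) : ∀ m : ℕ, paNegK G a m ≤ G (-((m : ℤ) + 1)) := by
  intro m
  induction m with
  | zero => simpa [paNegK] using paNegOne_le G a hgrade ha
  | succ m ih =>
      rw [paNegK, Submodule.span_le]
      rintro z ⟨x, hx, y, hy, rfl⟩
      have h := hgrade (-1) (-((m : ℤ) + 1)) x (paNegOne_le G a hgrade ha hx) y (ih hy)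
      rwa [show (-1 : ℤ) + -((m : ℤ) + 1) = -(((m : ℕ) + 1 : ℕ) : ℤ) - 1 by push_cast; ring,
        show (-(((m : ℕ) + 1 : ℕ) : ℤ) - 1) = -((((m + 1 : ℕ)) : ℤ) + 1) by push_cast; ring] at h

private lemma lie_foldr_mem (hgrade : ∀ i j : ℤ, ∀ x ∈ G i, ∀ y ∈ G j, ⁅x, y⁆ ∈ G (i + j))
    (hP1 : ∀ x ∈ G 0, ∀ y ∈ G 0, ⁅x, y⁆ = 0) (ha : a ∈ G (-1)) :
    ∀ l : List g, (∀ c ∈ l, c ∈ G 0) → ∀ x ∈ G 1,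
      ⁅x, l.foldr (fun c y => ⁅c, y⁆) a⁆ ∈
        Submodule.span ℂ {z : g | ∃ w ∈ G 1, z = ⁅a, w⁆} := by
  intro l
  induction l with
  | nil =>
      intro _ x hx
      simp only [List.foldr_nil]
      rw [← lie_skew]
      exact Submodule.neg_mem _ (Submodule.subset_span ⟨x, hx, rfl⟩)
  | cons c l ih =>
      intro hl x hx
      simp only [List.foldr_cons]
      have hc : c ∈ G 0 := hl c List.mem_cons_self
      have hl' : ∀ d ∈ l, d ∈ G 0 := fun d hd => hl d (List.mem_cons_of_mem _ hd)
      have hw1 : l.foldr (fun c y => ⁅c, y⁆) a ∈ G (-1) := foldr_mem G a hgrade ha l hl'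
      have hxw : ⁅x, l.foldr (fun c y => ⁅c, y⁆) a⁆ ∈ G 0 := by
        simpa using hgrade 1 (-1) x hx _ hw1
      have hxc : ⁅x, c⁆ ∈ G 1 := by simpa using hgrade 1 0 x hx c hc
      rw [leibniz_lie, hP1 c hc _ hxw, add_zero]
      exact ih hl' _ hxc

private lemma lie_paNegOne_mem (hgrade : ∀ i j : ℤ, ∀ x ∈ G i, ∀ y ∈ G j, ⁅x, y⁆ ∈ G (i + j))
    (hP1 : ∀ x ∈ G 0, ∀ y ∈ G 0, ⁅x, y⁆ = 0) (ha : a ∈ G (-1)) :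
    ∀ x ∈ G 1, ∀ y ∈ paNegOne G a,
      ⁅x, y⁆ ∈ Submodule.span ℂ {z : g | ∃ w ∈ G 1, z = ⁅a, w⁆} := by
  intro x hx y hy
  rw [paNegOne] at hy
  induction hy using Submodule.span_induction with
  | mem w hw =>
      obtain ⟨l, hl, rfl⟩ := hw
      exact lie_foldr_mem G a hgrade hP1 ha l hl x hx
  | zero => simp
  | add u v _ _ hu hv => rw [lie_add]; exact Submodule.add_mem _ hu hv
  | smul t u _ hu => rw [lie_smul]; exact Submodule.smul_mem _ t hu

private lemma lie_paNegK_mem (hgrade : ∀ i j : ℤ, ∀ x ∈ G i, ∀ y ∈ G j, ⁅x, y⁆ ∈ G (i + j))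
    (hP1 : ∀ x ∈ G 0, ∀ y ∈ G 0, ⁅x, y⁆ = 0) (ha : a ∈ G (-1)) :
    ∀ m : ℕ, ∀ x ∈ G ((m : ℤ) + 1), ∀ y ∈ paNegK G a m,
      ⁅x, y⁆ ∈ Submodule.span ℂ {z : g | ∃ w ∈ G 1, z = ⁅a, w⁆} := by
  intro m
  induction m with
  | zero =>
      intro x hx y hy
      rw [paNegK] at hy
      exact lie_paNegOne_mem G a hgrade hP1 ha x (by simpa using hx) y hy
  | succ m ih =>
      intro x hx y hy
      have hx' : x ∈ G ((m : ℤ) + 2) := by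
        rwa [show (((m + 1 : ℕ)) : ℤ) + 1 = (m : ℤ) + 2 by push_cast; ring] at hx
      rw [paNegK] at hy
      induction hy using Submodule.span_induction with
      | mem w hw =>
          obtain ⟨u, hu, v, hv, rfl⟩ := hw
          have hu1 : u ∈ G (-1) := paNegOne_le G a hgrade ha hu
          have hv1 : v ∈ G (-((m : ℤ) + 1)) := paNegK_le G a hgrade ha m hv
          have hxu : ⁅x, u⁆ ∈ G ((m : ℤ) + 1) := by
            have h := hgrade ((m : ℤ) + 2) (-1) x hx' u hu1
            rwa [show ((m : ℤ) + 2) + -1 = (m : ℤ) + 1 by ring] at h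
          have hxv : ⁅x, v⁆ ∈ G 1 := by
            have h := hgrade ((m : ℤ) + 2) (-((m : ℤ) + 1)) x hx' v hv1
            rwa [show ((m : ℤ) + 2) + -((m : ℤ) + 1) = 1 by ring] at h
          rw [leibniz_lie]
          refine Submodule.add_mem _ (ih _ hxu v hv) ?_
          rw [← lie_skew]
          exact Submodule.neg_mem _ (lie_paNegOne_mem G a hgrade hP1 ha _ hxv u hu)
      | zero => simp
      | add u v _ _ hu hv => rw [lie_add]; exact Submodule.add_mem _ hu hv
      | smul t u _ hu => rw [lie_smul]; exact Submodule.smul_mem _ t hu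

private lemma pa_le (hgrade : ∀ i j : ℤ, ∀ x ∈ G i, ∀ y ∈ G j, ⁅x, y⁆ ∈ G (i + j))
    (ha : a ∈ G (-1)) : ∀ j : ℤ, pa G a j ≤ G j := by
  intro j
  by_cases hj : 0 ≤ j
  · rw [pa, if_pos hj]
  · rw [pa, if_neg hj]
    refine (paNegK_le G a hgrade ha _).trans ?_
    rw [show -(((((-j).toNat - 1 : ℕ)) : ℤ) + 1) = j by omega]

/-- the degree-`k` piece of the derived algebra of `p^a`. -/
private noncomputable def Qdeg (G : ℤ → Submodule ℂ g) (a : g) (k : ℤ) : Submodule ℂ g :=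
  Submodule.span ℂ
    {z : g | ∃ i j : ℤ, i + j = k ∧ ∃ x ∈ pa G a i, ∃ y ∈ pa G a j, z = ⁅x, y⁆}

private lemma Qdeg_le (hgrade : ∀ i j : ℤ, ∀ x ∈ G i, ∀ y ∈ G j, ⁅x, y⁆ ∈ G (i + j))
    (ha : a ∈ G (-1)) : ∀ k : ℤ, Qdeg G a k ≤ G k := by
  intro k
  rw [Qdeg, Submodule.span_le]
  rintro z ⟨i, j, hij, x, hx, y, hy, rfl⟩
  have h := hgrade i j x (pa_le G a hgrade ha i hx) y (pa_le G a hgrade ha j hy)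
  rwa [hij] at h

private lemma spanD_le (hgrade : ∀ i j : ℤ, ∀ x ∈ G i, ∀ y ∈ G j, ⁅x, y⁆ ∈ G (i + j)) :
    Submodule.span ℂ
        {z : g | ∃ x ∈ (⨆ j : ℤ, pa G a j), ∃ y ∈ (⨆ j : ℤ, pa G a j), z = ⁅x, y⁆}
      ≤ ⨆ k : ℤ, Qdeg G a k := by
  rw [Submodule.span_le]
  rintro z ⟨x, hx, y, hy, rfl⟩
  refine Submodule.iSup_induction (pa G a)
    (motive := fun x => ∀ y ∈ (⨆ j : ℤ, pa G a j), ⁅x, y⁆ ∈ ⨆ k : ℤ, Qdeg G a k)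
    hx ?_ ?_ ?_ y hy
  · intro i x hxi y hy
    refine Submodule.iSup_induction (pa G a)
      (motive := fun y => ⁅x, y⁆ ∈ ⨆ k : ℤ, Qdeg G a k) hy ?_ ?_ ?_
    · intro j y hyj
      exact Submodule.mem_iSup_of_mem (i + j)
        (Submodule.subset_span ⟨i, j, rfl, x, hxi, y, hyj, rfl⟩)
    · simp
    · intro u v hu hv
      rw [lie_add]; exact Submodule.add_mem _ hu hv
  · intro y _; simp
  · intro u v hu hv y hy
    rw [add_lie]; exact Submodule.add_mem _ (hu y hy) (hv y hy)

private lemma Qdeg_zero_le (hgrade : ∀ i j : ℤ, ∀ x ∈ G i, ∀ y ∈ G j, ⁅x, y⁆ ∈ G (i + j))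
    (hP1 : ∀ x ∈ G 0, ∀ y ∈ G 0, ⁅x, y⁆ = 0) (ha : a ∈ G (-1)) :
    Qdeg G a 0 ≤ Submodule.span ℂ {z : g | ∃ w ∈ G 1, z = ⁅a, w⁆} := by
  rw [Qdeg, Submodule.span_le]
  rintro z ⟨i, j, hij, x, hx, y, hy, rfl⟩
  rcases lt_trichotomy i 0 with hi | hi | hi
  · have hj : (0 : ℤ) ≤ j := by omega
    rw [pa, if_pos hj] at hy
    rw [pa, if_neg (by omega : ¬ (0 : ℤ) ≤ i)] at hx
    rw [← lie_skew]
    refine Submodule.neg_mem _ ?_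
    exact lie_paNegK_mem G a hgrade hP1 ha _ y
      (by rw [show ((((-i).toNat - 1 : ℕ)) : ℤ) + 1 = j by omega]; exact hy) x hx
  · subst hi
    have hj : j = 0 := by omega
    subst hj
    rw [pa, if_pos le_rfl] at hx hy
    rw [hP1 x hx y hy]
    exact Submodule.zero_mem _
  · rw [pa, if_pos hi.le] at hx
    rw [pa, if_neg (by omega : ¬ (0 : ℤ) ≤ j)] at hy
    exact lie_paNegK_mem G a hgrade hP1 ha _ x
      (by rw [show ((((-j).toNat - 1 : ℕ)) : ℤ) + 1 = i by omega]; exact hx) y hy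

end Aux

/-- Lemma 2.2 b: `[p^a, p^a] ∩ g_0 = [a, g_1]`; in particular
section Aux

variable {g : Type*} [LieRing g] [LieAlgebra ℂ g] (G : ℤ → Submodule ℂ g) (a : g)

private lemma foldr_mem (hgrade : ∀ i j : ℤ, ∀ x ∈ G i, ∀ y ∈ G j, ⁅x, y⁆ ∈ G (i + j))
    (ha : a ∈ G (-1)) :
    ∀ l : List g, (∀ c ∈ l, c ∈ G 0) → l.foldr (fun c y => ⁅c, y⁆) a ∈ G (-1) := by
  intro l hl
  induction l with
  | nil => exact ha
  | cons c l ih =>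
      have h := hgrade 0 (-1) c (hl c (by simp)) _
        (ih fun d hd => hl d (List.mem_cons_of_mem _ hd))
      simpa using h

private lemma paNegOne_le (hgrade : ∀ i j : ℤ, ∀ x ∈ G i, ∀ y ∈ G j, ⁅x, y⁆ ∈ G (i + j))
    (ha : a ∈ G (-1)) : paNegOne G a ≤ G (-1) := by
  rw [paNegOne, Submodule.span_le]
  rintro x ⟨l, hl, rfl⟩
  exact foldr_mem G a hgrade ha l hl

private lemma paNegK_le (hgrade : ∀ i j : ℤ, ∀ x ∈ G i, ∀ y ∈ G j, ⁅x, y⁆ ∈ G (i + j))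
    (ha : a ∈ G (-1)) : ∀ m : ℕ, paNegK G a m ≤ G (-((m : ℤ) + 1)) := by
  intro m
  induction m with
  | zero => simpa [paNegK] using paNegOne_le G a hgrade ha
  | succ m ih =>
      rw [paNegK, Submodule.span_le]
      rintro z ⟨x, hx, y, hy, rfl⟩
      have h := hgrade (-1) (-((m : ℤ) + 1)) x (paNegOne_le G a hgrade ha hx) y (ih hy)
      rwa [show (-1 : ℤ) + -((m : ℤ) + 1) = -(((m : ℕ) + 1 : ℕ) : ℤ) - 1 by push_cast; ring,
        show (-(((m : ℕ) + 1 : ℕ) : ℤ) - 1) = -((((m + 1 : ℕ)) : ℤ) + 1) by push_cast; ring] at h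

private lemma lie_foldr_mem (hgrade : ∀ i j : ℤ, ∀ x ∈ G i, ∀ y ∈ G j, ⁅x, y⁆ ∈ G (i + j))
    (hP1 : ∀ x ∈ G 0, ∀ y ∈ G 0, ⁅x, y⁆ = 0) (ha : a ∈ G (-1)) :
    ∀ l : List g, (∀ c ∈ l, c ∈ G 0) → ∀ x ∈ G 1,
      ⁅x, l.foldr (fun c y => ⁅c, y⁆) a⁆ ∈
        Submodule.span ℂ {z : g | ∃ w ∈ G 1, z = ⁅a, w⁆} := by
  intro l
  induction l with
  | nil =>
      intro _ x hx
      simp only [List.foldr_nil]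
      rw [← lie_skew]
      exact Submodule.neg_mem _ (Submodule.subset_span ⟨x, hx, rfl⟩)
  | cons c l ih =>
      intro hl x hx
      simp only [List.foldr_cons]
      have hc : c ∈ G 0 := hl c (List.mem_cons_self _ _)
      have hl' : ∀ d ∈ l, d ∈ G 0 := fun d hd => hl d (List.mem_cons_of_mem _ hd)
      have hw1 : l.foldr (fun c y => ⁅c, y⁆) a ∈ G (-1) := foldr_mem G a hgrade ha l hl'
      have hxw : ⁅x, l.foldr (fun c y => ⁅c, y⁆) a⁆ ∈ G 0 := by
        simpa using hgrade 1 (-1) x hx _ hw1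
      have hxc : ⁅x, c⁆ ∈ G 1 := by simpa using hgrade 1 0 x hx c hc
      rw [leibniz_lie, hP1 c hc _ hxw, add_zero]
      exact ih hl' _ hxc

private lemma lie_paNegOne_mem (hgrade : ∀ i j : ℤ, ∀ x ∈ G i, ∀ y ∈ G j, ⁅x, y⁆ ∈ G (i + j))
    (hP1 : ∀ x ∈ G 0, ∀ y ∈ G 0, ⁅x, y⁆ = 0) (ha : a ∈ G (-1)) :
    ∀ x ∈ G 1, ∀ y ∈ paNegOne G a,
      ⁅x, y⁆ ∈ Submodule.span ℂ {z : g | ∃ w ∈ G 1, z = ⁅a, w⁆} := by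
  intro x hx y hy
  rw [paNegOne] at hy
  induction hy using Submodule.span_induction with
  | mem w hw =>
      obtain ⟨l, hl, rfl⟩ := hw
      exact lie_foldr_mem G a hgrade hP1 ha l hl x hx
  | zero => simp
  | add u v _ _ hu hv => rw [lie_add]; exact Submodule.add_mem _ hu hv
  | smul t u _ hu => rw [lie_smul]; exact Submodule.smul_mem _ t hu

private lemma lie_paNegK_mem (hgrade : ∀ i j : ℤ, ∀ x ∈ G i, ∀ y ∈ G j, ⁅x, y⁆ ∈ G (i + j))
    (hP1 : ∀ x ∈ G 0, ∀ y ∈ G 0, ⁅x, y⁆ = 0) (ha : a ∈ G (-1)) :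
    ∀ m : ℕ, ∀ x ∈ G ((m : ℤ) + 1), ∀ y ∈ paNegK G a m,
      ⁅x, y⁆ ∈ Submodule.span ℂ {z : g | ∃ w ∈ G 1, z = ⁅a, w⁆} := by
  intro m
  induction m with
  | zero =>
      intro x hx y hy
      rw [paNegK] at hy
      exact lie_paNegOne_mem G a hgrade hP1 ha x (by simpa using hx) y hy
  | succ m ih =>
      intro x hx y hy
      have hx' : x ∈ G ((m : ℤ) + 2) := by
        rwa [show (((m + 1 : ℕ)) : ℤ) + 1 = (m : ℤ) + 2 by push_cast; ring] at hx
      rw [paNegK] at hy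
      induction hy using Submodule.span_induction with
      | mem w hw =>
          obtain ⟨u, hu, v, hv, rfl⟩ := hw
          have hu1 : u ∈ G (-1) := paNegOne_le G a hgrade ha hu
          have hv1 : v ∈ G (-((m : ℤ) + 1)) := paNegK_le G a hgrade ha m hv
          have hxu : ⁅x, u⁆ ∈ G ((m : ℤ) + 1) := by
            have h := hgrade ((m : ℤ) + 2) (-1) x hx' u hu1
            rwa [show ((m : ℤ) + 2) + -1 = (m : ℤ) + 1 by ring] at h
          have hxv : ⁅x, v⁆ ∈ G 1 := by
            have h := hgrade ((m : ℤ) + 2) (-((m : ℤ) + 1)) x hx' v hv1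
            rwa [show ((m : ℤ) + 2) + -((m : ℤ) + 1) = 1 by ring] at h
          rw [leibniz_lie]
          refine Submodule.add_mem _ (ih _ hxu v hv) ?_
          rw [← lie_skew]
          exact Submodule.neg_mem _ (lie_paNegOne_mem G a hgrade hP1 ha _ hxv u hu)
      | zero => simp
      | add u v _ _ hu hv => rw [lie_add]; exact Submodule.add_mem _ hu hv
      | smul t u _ hu => rw [lie_smul]; exact Submodule.smul_mem _ t hu

private lemma pa_le (hgrade : ∀ i j : ℤ, ∀ x ∈ G i, ∀ y ∈ G j, ⁅x, y⁆ ∈ G (i + j))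
    (ha : a ∈ G (-1)) : ∀ j : ℤ, pa G a j ≤ G j := by
  intro j
  by_cases hj : 0 ≤ j
  · rw [pa, if_pos hj]
  · rw [pa, if_neg hj]
    refine (paNegK_le G a hgrade ha _).trans ?_
    rw [show -(((((-j).toNat - 1 : ℕ)) : ℤ) + 1) = j by omega]

/-- the degree-`k` piece of the derived algebra of `p^a`. -/
private noncomputable def Qdeg (G : ℤ → Submodule ℂ g) (a : g) (k : ℤ) : Submodule ℂ g :=
  Submodule.span ℂ
    {z : g | ∃ i j : ℤ, i + j = k ∧ ∃ x ∈ pa G a i, ∃ y ∈ pa G a j, z = ⁅x, y⁆}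

private lemma Qdeg_le (hgrade : ∀ i j : ℤ, ∀ x ∈ G i, ∀ y ∈ G j, ⁅x, y⁆ ∈ G (i + j))
    (ha : a ∈ G (-1)) : ∀ k : ℤ, Qdeg G a k ≤ G k := by
  intro k
  rw [Qdeg, Submodule.span_le]
  rintro z ⟨i, j, hij, x, hx, y, hy, rfl⟩
  have h := hgrade i j x (pa_le G a hgrade ha i hx) y (pa_le G a hgrade ha j hy)
  rwa [hij] at h

private lemma spanD_le (hgrade : ∀ i j : ℤ, ∀ x ∈ G i, ∀ y ∈ G j, ⁅x, y⁆ ∈ G (i + j)) :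
    Submodule.span ℂ
        {z : g | ∃ x ∈ (⨆ j : ℤ, pa G a j), ∃ y ∈ (⨆ j : ℤ, pa G a j), z = ⁅x, y⁆}
      ≤ ⨆ k : ℤ, Qdeg G a k := by
  rw [Submodule.span_le]
  rintro z ⟨x, hx, y, hy, rfl⟩
  refine Submodule.iSup_induction (pa G a)
    (C := fun x => ∀ y ∈ (⨆ j : ℤ, pa G a j), ⁅x, y⁆ ∈ ⨆ k : ℤ, Qdeg G a k)
    hx ?_ ?_ ?_ y hy
  · intro i x hxi y hy
    refine Submodule.iSup_induction (pa G a)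
      (C := fun y => ⁅x, y⁆ ∈ ⨆ k : ℤ, Qdeg G a k) hy ?_ ?_ ?_
    · intro j y hyj
      exact Submodule.mem_iSup_of_mem (i + j)
        (Submodule.subset_span ⟨i, j, rfl, x, hxi, y, hyj, rfl⟩)
    · simp
    · intro u v hu hv
      rw [lie_add]; exact Submodule.add_mem _ hu hv
  · intro y _; simp
  · intro u v hu hv y hy
    rw [add_lie]; exact Submodule.add_mem _ (hu y hy) (hv y hy)

private lemma Qdeg_zero_le (hgrade : ∀ i j : ℤ, ∀ x ∈ G i, ∀ y ∈ G j, ⁅x, y⁆ ∈ G (i + j))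
    (hP1 : ∀ x ∈ G 0, ∀ y ∈ G 0, ⁅x, y⁆ = 0) (ha : a ∈ G (-1)) :
    Qdeg G a 0 ≤ Submodule.span ℂ {z : g | ∃ w ∈ G 1, z = ⁅a, w⁆} := by
  rw [Qdeg, Submodule.span_le]
  rintro z ⟨i, j, hij, x, hx, y, hy, rfl⟩
  rcases lt_trichotomy i 0 with hi | hi | hi
  · have hj : (0 : ℤ) ≤ j := by omega
    rw [pa, if_pos hj] at hy
    rw [pa, if_neg (by omega : ¬ (0 : ℤ) ≤ i)] at hx
    rw [← lie_skew]
    refine Submodule.neg_mem _ ?_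
    exact lie_paNegK_mem G a hgrade hP1 ha _ y
      (by rw [show ((((-i).toNat - 1 : ℕ)) : ℤ) + 1 = j by omega]; exact hy) x hx
  · subst hi
    have hj : j = 0 := by omega
    subst hj
    rw [pa, if_pos le_rfl] at hx hy
    rw [hP1 x hx y hy]
    exact Submodule.zero_mem _
  · rw [pa, if_pos hi.le] at hx
    rw [pa, if_neg (by omega : ¬ (0 : ℤ) ≤ j)] at hy
    exact lie_paNegK_mem G a hgrade hP1 ha _ x
      (by rw [show ((((-j).toNat - 1 : ℕ)) : ℤ) + 1 = i by omega]; exact hx) y hy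

end Aux
`[g_1, p^a_{−1}] = [a, g_1]` (all as spans). -/
theorem stmt2 {g : Type*} [LieRing g] [LieAlgebra ℂ g]
    (G : ℤ → Submodule ℂ g)
    (hdirect : DirectSum.IsInternal G)
    (hgrade : ∀ i j : ℤ, ∀ x ∈ G i, ∀ y ∈ G j, ⁅x, y⁆ ∈ G (i + j))
    (hP1 : ∀ x ∈ G 0, ∀ y ∈ G 0, ⁅x, y⁆ = 0)
    (hP2 : ∀ k : ℤ, 0 < k → ∀ b ∈ G (-k), (∀ x ∈ G 1, ⁅b, x⁆ = 0) → b = 0)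
    (a : g) (ha : a ∈ G (-1)) (ha0 : a ≠ 0) :
    Submodule.span ℂ
        {z : g | ∃ x ∈ (⨆ j : ℤ, pa G a j), ∃ y ∈ (⨆ j : ℤ, pa G a j), z = ⁅x, y⁆}
      ⊓ G 0
      = Submodule.span ℂ {z : g | ∃ x ∈ G 1, z = ⁅a, x⁆}
    ∧ Submodule.span ℂ {z : g | ∃ x ∈ G 1, ∃ y ∈ paNegOne G a, z = ⁅x, y⁆}
      = Submodule.span ℂ {z : g | ∃ x ∈ G 1, z = ⁅a, x⁆} := by
  have ha' : a ∈ paNegOne G a := Submodule.subset_span ⟨[], by simp, rfl⟩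
  have hSle : Submodule.span ℂ {z : g | ∃ x ∈ G 1, z = ⁅a, x⁆}
      ≤ Submodule.span ℂ
        {z : g | ∃ x ∈ (⨆ j : ℤ, pa G a j), ∃ y ∈ (⨆ j : ℤ, pa G a j), z = ⁅x, y⁆}
      ⊓ G 0 := by
    rw [Submodule.span_le]
    rintro z ⟨x, hx, rfl⟩
    constructor
    · refine Submodule.subset_span ⟨a, ?_, x, ?_, rfl⟩
      · refine Submodule.mem_iSup_of_mem (-1) ?_
        rw [pa, if_neg (by norm_num)]
        exact ha'
      · refine Submodule.mem_iSup_of_mem 1 ?_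
        rw [pa, if_pos (by norm_num)]
        exact hx
    · simpa using hgrade (-1) 1 a ha x hx
  constructor
  · apply le_antisymm
    · have h1 := inf_le_inf_right (G 0) (spanD_le G a hgrade)
      refine h1.trans ?_
      have hsplit : (⨆ k : ℤ, Qdeg G a k) ≤ Qdeg G a 0 ⊔ ⨆ k : ℤ, ⨆ _ : k ≠ 0, Qdeg G a k := by
        refine iSup_le fun k => ?_
        by_cases hk : k = 0
        · subst hk; exact le_sup_left
        · exact le_sup_of_le_right (le_iSup₂ (f := fun k (_ : k ≠ 0) => Qdeg G a k) k hk)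
      refine (inf_le_inf_right (G 0) hsplit).trans ?_
      rw [sup_inf_assoc_of_le _ (Qdeg_le G a hgrade ha 0)]
      have hB : (⨆ k : ℤ, ⨆ _ : k ≠ 0, Qdeg G a k) ≤ ⨆ k : ℤ, ⨆ _ : k ≠ 0, G k :=
        iSup₂_le fun k hk => (Qdeg_le G a hgrade ha k).trans
          (le_iSup₂ (f := fun k (_ : k ≠ 0) => G k) k hk)
      have hdisj : Disjoint (G 0) (⨆ k : ℤ, ⨆ _ : k ≠ 0, G k) :=
        hdirect.submodule_iSupIndep 0
      have hbot : (⨆ k : ℤ, ⨆ _ : k ≠ 0, Qdeg G a k) ⊓ G 0 = ⊥ := by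
        rw [inf_comm]
        exact (hdisj.mono_right hB).eq_bot
      rw [hbot, sup_bot_eq]
      exact Qdeg_zero_le G a hgrade hP1 ha
    · exact hSle
  · apply le_antisymm
    · rw [Submodule.span_le]
      rintro z ⟨x, hx, y, hy, rfl⟩
      exact lie_paNegOne_mem G a hgrade hP1 ha x hx y hy
    · rw [Submodule.span_le]
      rintro z ⟨x, hx, rfl⟩
      rw [← lie_skew]
      exact Submodule.neg_mem _ (Submodule.subset_span ⟨x, hx, a, ha', rfl⟩)
end

section
/- Let n ≥ 0 be an integer and let G, Δ, φ ∈ ℂ[[x]] satisfy Δ = [∂]_n(G) and φ = (E−1)·G. Then n·Δ + ∂((E−1)·Δ) = [∂]_{n+1}(φ). (This is identity (4.5): if Δ_λ(x) = [d/dx]_n(φ(x)/(e^x−1)), then F_λ(x) := nΔ_λ(x) + d/dx((e^x−1)Δ_λ(x)) equals [d/dx]_{n+1}φ(x).) -/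
open Polynomial

/-- The derivation `∂ = d/dx` on `ℂ[[x]]`, as a linear endomorphism. -/
noncomputable def Dop : Module.End ℂ (PowerSeries ℂ) :=
  (PowerSeries.derivative ℂ).toLinearMap

/-- The exponential power series `E = e^x = Σ_{m≥0} x^m/m!`. -/
noncomputable def E : PowerSeries ℂ := PowerSeries.exp ℂ

/-- The falling-factorial polynomial `[w]_n = w(w−1)⋯(w−n+1)` (with `[w]_0 = 1`). -/
noncomputable def ffp (n : ℕ) : ℂ[X] :=
  ∏ i ∈ Finset.range n, (X - C (i : ℂ))

/-- The operator `[∂]_n = ∂(∂−1)⋯(∂−n+1)` on `ℂ[[x]]`: the polynomial `[w]_n`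
evaluated at `∂`. -/
noncomputable def ffD (n : ℕ) : Module.End ℂ (PowerSeries ℂ) :=
  Polynomial.aeval Dop (ffp n)

lemma Dop_mul (f g : PowerSeries ℂ) : Dop (f * g) = f * Dop g + g * Dop f :=
  PowerSeries.derivativeFun_mul f g

lemma Dop_E : Dop E = E := by
  ext n
  rw [Dop, E]
  show PowerSeries.coeff n (PowerSeries.derivative ℂ _) = _
  rw [PowerSeries.coeff_derivativeFun, PowerSeries.coeff_exp, PowerSeries.coeff_exp]
  push_cast
  rw [Nat.factorial_succ]
  push_cast
  have hb : (n.factorial : ℂ) ≠ 0 := Nat.cast_ne_zero.mpr (Nat.factorial_ne_zero _)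
  have ha : ((n:ℂ)+1) ≠ 0 := Nat.cast_add_one_ne_zero n
  field_simp

lemma ffD_succ (n : ℕ) (f : PowerSeries ℂ) :
    ffD (n+1) f = Dop (ffD n f) - (n : PowerSeries ℂ) * ffD n f := by
  rw [ffD, ffp, Finset.prod_range_succ, mul_comm, map_mul]
  simp only [map_sub, Polynomial.aeval_X, Polynomial.aeval_C, Module.End.mul_apply,
    LinearMap.sub_apply, Module.algebraMap_end_apply, Algebra.smul_def, ffD, ffp]
  norm_cast

lemma Dop_natCast (n : ℕ) : Dop ((n : PowerSeries ℂ)) = 0 := by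
  have : ((n : PowerSeries ℂ)) = PowerSeries.C (n : ℂ) := by norm_cast
  rw [this]
  exact PowerSeries.derivative_C

lemma Dop_one : Dop (1 : PowerSeries ℂ) = 0 := by simpa using Dop_natCast 1

lemma ffD_zero (f : PowerSeries ℂ) : ffD 0 f = f := by
  simp [ffD, ffp]

lemma key (n : ℕ) (G : PowerSeries ℂ) :
    ffD (n+1) ((E - 1) * G) =
      E * (Dop (ffD n G) + ffD n G) - Dop (ffD n G) + (n : PowerSeries ℂ) * ffD n G := by
  induction n with
  | zero =>
    rw [ffD_succ]
    simp only [ffD_zero, Nat.cast_zero, Dop_mul, Dop_E, map_sub, Dop_one]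
    ring
  | succ n ih =>
    rw [ffD_succ (n+1) ((E-1)*G), ih, ffD_succ n G]
    simp only [map_add, map_sub, Dop_mul, Dop_E, Dop_natCast]
    push_cast
    ring

/-- identity (4.5): if `Δ = [∂]_n G` and `φ = (E−1)·G`, then
`n·Δ + ∂((E−1)·Δ) = [∂]_{n+1} φ`. -/
theorem stmt15 (n : ℕ) (G Δ φ : PowerSeries ℂ)
    (hΔ : Δ = ffD n G) (hφ : φ = (E - 1) * G) :
    (n : PowerSeries ℂ) * Δ + Dop ((E - 1) * Δ) = ffD (n + 1) φ := by
  subst hΔ hφ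
  rw [key]
  simp only [Dop_mul, map_sub, Dop_E, Dop_one]
  ring
end
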